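/- Let F be a number field. If n is an F-practical natural number and p is the smallest prime not dividing n (i.e., p is prime, p does not divide n, and every prime q < p divides n), then p·n is also F-practical. -/

import Mathlib

open Polynomial

/-- A natural number `n ≥ 1` is `F`-practical if for every `m` with `0 ≤ m ≤ n`,
the polynomial `X^n - 1` has a monic divisor of degree `m` in `F[X]`. -/
def IsFPractical (F : Type*) [Field F] (n : ℕ) : Prop :=
  1 ≤ n ∧ ∀ m : ℕ, m ≤ n → ∃ d : Polynomial F, d.Monic ∧
    d ∣ (Polynomial.X ^ n - 1) ∧ d.natDegree = m

private lemma pow_mod_helper {K : Type*} [Monoid K] {n : ℕ} (ζ : K) (hζ : ζ ^ n = 1)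
    (a : ℕ) : ζ ^ a = ζ ^ (a % n) := by
  conv_lhs => rw [← Nat.div_add_mod a n]
  rw [pow_add, pow_mul, hζ, one_pow, one_mul]

private lemma keyFactor {F : Type*} [Field F] [CharZero F] {n p : ℕ} (hn : 0 < n) (hp0 : 0 < p)
    (hcop : Nat.Coprime p n) {d1 : F[X]} (hm : d1.Monic) (hd : d1 ∣ X ^ n - 1) :
    ∃ g : F[X], g.Monic ∧ g ∣ X ^ (p * n) - 1 ∧ IsCoprime g (X ^ n - 1) ∧
      g.natDegree = (p - 1) * d1.natDegree := by
  classical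
  set K := AlgebraicClosure F with hK
  set φ : F →+* K := algebraMap F K with hφ
  -- basic separability / monicity facts
  have hQsep : (X ^ n - 1 : F[X]).Separable := by
    have h := Polynomial.separable_X_pow_sub_C (1 : F)
      (by exact_mod_cast (Nat.cast_ne_zero (R := F)).mpr hn.ne') one_ne_zero
    simpa using h
  have hPNsep : (X ^ (p * n) - 1 : F[X]).Separable := by
    have h := Polynomial.separable_X_pow_sub_C (1 : F)
      (by exact_mod_cast (Nat.cast_ne_zero (R := F)).mpr (Nat.mul_ne_zero hp0.ne' hn.ne'))
      one_ne_zero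
    simpa using h
  have hQmonic : (X ^ n - 1 : F[X]).Monic := by
    simpa using monic_X_pow_sub_C (1 : F) hn.ne'
  have hQne : (X ^ n - 1 : F[X]) ≠ 0 := hQmonic.ne_zero
  -- P1 = d1(X^p)
  set P1 : F[X] := d1.comp (X ^ p) with hP1def
  have hP1monic : P1.Monic := hm.comp (monic_X_pow p) (by simp [natDegree_X_pow, hp0.ne'])
  have hP1ne : P1 ≠ 0 := hP1monic.ne_zero
  have hP1deg : P1.natDegree = d1.natDegree * p := by
    rw [hP1def, natDegree_comp, natDegree_X_pow]
  have hcompQ : (X ^ n - 1 : F[X]).comp (X ^ p) = X ^ (p * n) - 1 := by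
    simp [sub_comp, pow_comp, ← pow_mul, mul_comm n p]
  have hP1dvd : P1 ∣ X ^ (p * n) - 1 := by
    obtain ⟨e, he⟩ := hd
    exact ⟨e.comp (X ^ p), by rw [← hcompQ, he, mul_comp]⟩
  have hP1sep : P1.Separable := hPNsep.of_dvd hP1dvd
  -- the gcd
  set c : F[X] := EuclideanDomain.gcd P1 (X ^ n - 1) with hcdef
  have hcP : c ∣ P1 := EuclideanDomain.gcd_dvd_left _ _
  have hcQ : c ∣ X ^ n - 1 := EuclideanDomain.gcd_dvd_right _ _
  have hcne : c ≠ 0 := fun h => hP1ne ((EuclideanDomain.gcd_eq_zero_iff.mp (hcdef ▸ h)).1)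
  -- facts over K
  have hmapQ : (X ^ n - 1 : F[X]).map φ = X ^ n - 1 := by simp
  have hQKsep : (X ^ n - 1 : K[X]).Separable := by rw [← hmapQ]; exact hQsep.map
  have hmapP1 : P1.map φ = (d1.map φ).comp (X ^ p) := by
    rw [hP1def, map_comp]; simp
  have hevalP1 : ∀ ζ : K, (P1.map φ).eval ζ = (d1.map φ).eval (ζ ^ p) := by
    intro ζ; rw [hmapP1, eval_comp]; simp
  have hd1K : (d1.map φ) ∣ (X ^ n - 1 : K[X]) := by
    rw [← hmapQ]; exact Polynomial.map_dvd φ hd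
  have hd1Ksep : (d1.map φ).Separable := hQKsep.of_dvd hd1K
  have hd1Kne : d1.map φ ≠ 0 := (hm.map φ).ne_zero
  have hTcard : (d1.map φ).roots.toFinset.card = d1.natDegree := by
    rw [Multiset.toFinset_card_of_nodup (nodup_roots hd1Ksep)]
    have hs : ((d1.map φ).roots.card = (d1.map φ).natDegree) :=
      splits_iff_card_roots.mp (IsAlgClosed.splits _)
    rw [hs, natDegree_map]
  -- roots of map d1 are n-th roots of unity
  have hrootsS : ∀ ζ : K, (d1.map φ).eval ζ = 0 → ζ ∈ nthRootsFinset n (1 : K) := by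
    intro ζ hζ
    obtain ⟨e, he⟩ := hd1K
    rw [mem_nthRootsFinset hn 1, ← sub_eq_zero]
    have : (X ^ n - 1 : K[X]).eval ζ = 0 := by rw [he, eval_mul, hζ, zero_mul]
    simpa using this
  -- the p-th power map on n-th roots of unity is bijective
  obtain ⟨u, hu⟩ : ∃ u, (p * u) % n = 1 % n := by
    refine ⟨p ^ (Nat.totient n - 1), ?_⟩
    have h1 : p * p ^ (Nat.totient n - 1) = p ^ Nat.totient n := by
      rw [← pow_succ']
      congr 1
      have := Nat.totient_pos.mpr hn
      omega
    rw [h1]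
    exact Nat.ModEq.pow_totient hcop
  have hinj : ∀ ζ ∈ nthRootsFinset n (1 : K), ∀ ξ ∈ nthRootsFinset n (1 : K), ζ ^ p = ξ ^ p → ζ = ξ := by
    intro ζ hζ ξ hξ h
    have hζ1 : ζ ^ n = 1 := (mem_nthRootsFinset hn 1).mp hζ
    have hξ1 : ξ ^ n = 1 := (mem_nthRootsFinset hn 1).mp hξ
    calc ζ = ζ ^ (p * u) := by
            rw [pow_mod_helper ζ hζ1 (p * u), hu, ← pow_mod_helper ζ hζ1 1, pow_one]
      _ = (ζ ^ p) ^ u := by rw [pow_mul]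
      _ = (ξ ^ p) ^ u := by rw [h]
      _ = ξ ^ (p * u) := by rw [pow_mul]
      _ = ξ := by rw [pow_mod_helper ξ hξ1 (p * u), hu, ← pow_mod_helper ξ hξ1 1, pow_one]
  have hmapS : ∀ ζ ∈ nthRootsFinset n (1 : K), ζ ^ p ∈ nthRootsFinset n (1 : K) := by
    intro ζ hζ
    rw [mem_nthRootsFinset hn 1] at hζ ⊢
    rw [← pow_mul, mul_comm p n, pow_mul, hζ, one_pow]
  have hsurj : ∀ η ∈ nthRootsFinset n (1 : K), ∃ ζ ∈ nthRootsFinset n (1 : K), ζ ^ p = η := by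
    have himg : (nthRootsFinset n (1 : K)).image (· ^ p) = nthRootsFinset n (1 : K) := by
      apply Finset.eq_of_subset_of_card_le
      · intro x hx
        obtain ⟨ζ, hζ, rfl⟩ := Finset.mem_image.mp hx
        exact hmapS ζ hζ
      · rw [Finset.card_image_of_injOn (fun ζ hζ ξ hξ h => hinj ζ hζ ξ hξ h)]
    intro η hη
    rw [← himg] at hη
    obtain ⟨ζ, hζ, hζη⟩ := Finset.mem_image.mp hη
    exact ⟨ζ, hζ, hζη⟩
  -- the gcd over K
  have hmapgcd : c.map φ = EuclideanDomain.gcd (P1.map φ) ((X ^ n - 1 : F[X]).map φ) := by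
    rw [hcdef, gcd_map]
  have hGdvdQK : c.map φ ∣ (X ^ n - 1 : K[X]) := by
    rw [← hmapQ]; exact Polynomial.map_dvd φ hcQ
  have hGsep : (c.map φ).Separable := hQKsep.of_dvd hGdvdQK
  have hGne : c.map φ ≠ 0 := by
    simpa using hcne
  have hGrootIff : ∀ ζ : K, (c.map φ).eval ζ = 0 ↔
      ((d1.map φ).eval (ζ ^ p) = 0 ∧ ζ ∈ nthRootsFinset n (1 : K)) := by
    intro ζ
    rw [hmapgcd]
    constructor
    · intro h
      have h1 := root_left_of_root_gcd (ϕ := RingHom.id K) h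
      have h2 := root_right_of_root_gcd (f := P1.map φ) (g := (X ^ n - 1 : F[X]).map φ)
        (ϕ := RingHom.id K) h
      rw [← eval, hevalP1] at h1
      rw [← eval, hmapQ] at h2
      refine ⟨h1, ?_⟩
      rw [mem_nthRootsFinset hn 1, ← sub_eq_zero]
      simpa using h2
    · rintro ⟨h1, h2⟩
      have e1 : (P1.map φ).eval ζ = 0 := by rw [hevalP1]; exact h1
      have e2 : ((X ^ n - 1 : F[X]).map φ).eval ζ = 0 := by
        rw [hmapQ]
        rw [mem_nthRootsFinset hn 1] at h2
        simp [h2]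
      exact eval₂_gcd_eq_zero (ϕ := RingHom.id K) (α := ζ)
        e1 e2
  have hGroots : (c.map φ).roots.toFinset =
      (nthRootsFinset n (1 : K)).filter (fun ζ => (d1.map φ).eval (ζ ^ p) = 0) := by
    ext ζ
    simp only [Multiset.mem_toFinset, Finset.mem_filter, mem_roots hGne, IsRoot.def]
    rw [hGrootIff ζ, and_comm]
  -- degree of c
  have hdegc : c.natDegree = d1.natDegree := by
    have h1 : (c.map φ).roots.card = (c.map φ).natDegree :=
      splits_iff_card_roots.mp (IsAlgClosed.splits _)
    have h2 : c.natDegree = (c.map φ).roots.toFinset.card := by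
      rw [Multiset.toFinset_card_of_nodup (nodup_roots hGsep), h1, natDegree_map]
    rw [h2, hGroots, ← hTcard]
    apply Finset.card_bij (fun ζ _ => ζ ^ p)
    · intro ζ hζ
      rw [Finset.mem_filter] at hζ
      rw [Multiset.mem_toFinset, mem_roots hd1Kne]
      exact hζ.2
    · intro ζ hζ ξ hξ h
      rw [Finset.mem_filter] at hζ hξ
      exact hinj ζ hζ.1 ξ hξ.1 h
    · intro η hη
      rw [Multiset.mem_toFinset, mem_roots hd1Kne] at hη
      obtain ⟨ζ, hζ, rfl⟩ := hsurj η (hrootsS η hη)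
      exact ⟨ζ, Finset.mem_filter.mpr ⟨hζ, hη⟩, rfl⟩
  -- monicize c
  set c1 : F[X] := c * C (c.leadingCoeff)⁻¹ with hc1def
  have hc1monic : c1.Monic := monic_mul_leadingCoeff_inv hcne
  have hc1ne : c1 ≠ 0 := hc1monic.ne_zero
  have hcc1 : c = c1 * C (c.leadingCoeff) := by
    rw [hc1def, mul_assoc, ← C_mul, inv_mul_cancel₀ (leadingCoeff_ne_zero.mpr hcne), C_1, mul_one]
  have hc1P : c1 ∣ P1 := dvd_trans (Dvd.intro _ hcc1.symm) hcP
  have hc1deg : c1.natDegree = c.natDegree := by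
    rw [hc1def, natDegree_mul hcne (by simp [leadingCoeff_ne_zero.mpr hcne]), natDegree_C,
      add_zero]
  -- the complement g
  set g : F[X] := P1 / c1 with hgdef
  have hfac : c1 * g = P1 := EuclideanDomain.mul_div_cancel' hc1ne hc1P
  have hgne : g ≠ 0 := fun h => hP1ne (by rw [← hfac, h, mul_zero])
  have hgmonic : g.Monic := hc1monic.of_mul_monic_left (by rw [hfac]; exact hP1monic)
  have hgdvd : g ∣ X ^ (p * n) - 1 := dvd_trans ⟨c1, by rw [mul_comm, hfac]⟩ hP1dvd
  have hgdeg : g.natDegree = (p - 1) * d1.natDegree := by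
    have h1 : P1.natDegree = c1.natDegree + g.natDegree := by
      rw [← hfac, natDegree_mul hc1ne hgne]
    rw [hP1deg, hc1deg, hdegc] at h1
    rw [Nat.sub_mul, one_mul, mul_comm p]
    omega
  -- coprimality
  have hgcop : IsCoprime g (X ^ n - 1 : F[X]) := by
    rw [← isCoprime_map φ]
    by_contra hnc
    have he1 : ¬IsUnit (EuclideanDomain.gcd (g.map φ) ((X ^ n - 1 : F[X]).map φ)) := by
      rw [EuclideanDomain.gcd_isUnit_iff]; exact hnc
    have hene : EuclideanDomain.gcd (g.map φ) ((X ^ n - 1 : F[X]).map φ) ≠ 0 := by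
      intro h
      rw [EuclideanDomain.gcd_eq_zero_iff] at h
      exact (Polynomial.map_ne_zero hQne : (X ^ n - 1 : F[X]).map φ ≠ 0) h.2
    have hdeg0 : (EuclideanDomain.gcd (g.map φ) ((X ^ n - 1 : F[X]).map φ)).degree ≠ 0 := by
      intro h
      exact he1 (isUnit_iff_degree_eq_zero.mpr h)
    obtain ⟨ζ, hζ⟩ := IsAlgClosed.exists_root _ hdeg0
    have hgz : (g.map φ).eval ζ = 0 := by
      have := root_left_of_root_gcd (ϕ := RingHom.id K) hζ
      exact this
    have hqz : ((X ^ n - 1 : F[X]).map φ).eval ζ = 0 := by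
      have := root_right_of_root_gcd (f := g.map φ) (g := (X ^ n - 1 : F[X]).map φ)
        (ϕ := RingHom.id K) hζ
      exact this
    -- ζ is a root of c1 as well
    have hP1z : (P1.map φ).eval ζ = 0 := by
      rw [← hfac, Polynomial.map_mul, eval_mul, hgz, mul_zero]
    have hcz : (c.map φ).eval ζ = 0 := by
      rw [hGrootIff ζ]
      constructor
      · rw [← hevalP1]; exact hP1z
      · rw [mem_nthRootsFinset hn 1, ← sub_eq_zero]
        have := hqz
        rw [hmapQ] at this
        simpa using this
    have hc1z : (c1.map φ).eval ζ = 0 := by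
      rw [hc1def, Polynomial.map_mul, eval_mul, hcz, zero_mul]
    -- contradiction with squarefreeness of P1
    have hsq : Squarefree (P1.map φ) := (hP1sep.map).squarefree
    have hdd : (X - C ζ) * (X - C ζ) ∣ P1.map φ := by
      rw [← hfac, Polynomial.map_mul]
      exact mul_dvd_mul (dvd_iff_isRoot.mpr hc1z) (dvd_iff_isRoot.mpr hgz)
    exact (not_isUnit_X_sub_C ζ) (hsq _ hdd)
  exact ⟨g, hgmonic, hgdvd, hgcop, hgdeg⟩

private lemma sub_one_le_of_smallest_prime {n p : ℕ} (hn : 1 ≤ n) (hp : p.Prime)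
    (hmin : ∀ q : ℕ, q.Prime → q < p → q ∣ n) : p - 1 ≤ n := by
  by_cases hp2 : p = 2
  · omega
  · have hp3 : 3 ≤ p := by have := hp.two_le; omega
    have h2n : 2 ∣ n := hmin 2 Nat.prime_two (by omega)
    have hk2 : (p - 1) / 2 ≠ 0 := by omega
    obtain ⟨q, hq, hq1, hq2⟩ := Nat.exists_prime_lt_and_le_two_mul ((p - 1) / 2) hk2
    have hdm := Nat.div_add_mod (p - 1) 2
    have hmod : (p - 1) % 2 < 2 := Nat.mod_lt _ (by omega)
    have hqk : q ≤ p - 1 := by omega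
    have hqn : q ∣ n := hmin q hq (by omega)
    by_cases hq2' : q = 2
    · -- then p - 1 ≤ 3, so p - 1 = 2 (p = 4 is not prime)
      have hple : p ≤ 4 := by omega
      have hp4 : p ≠ 4 := by rintro rfl; norm_num at hp
      have : p = 3 := by omega
      subst this
      have : 2 ≤ n := Nat.le_of_dvd (by omega) h2n
      omega
    · have h2q : ¬ (2 = q) := fun h => hq2' h.symm
      have hcop : Nat.Coprime 2 q := (Nat.coprime_primes Nat.prime_two hq).mpr h2q
      have hdvd : 2 * q ∣ n := hcop.mul_dvd_of_dvd_of_dvd h2n hqn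
      have hle : 2 * q ≤ n := Nat.le_of_dvd (by omega) hdvd
      omega

/-- If `n` is `F`-practical (for a number field `F`) and `p` is the smallest prime not
dividing `n`, then `p * n` is also `F`-practical. -/
theorem FPractical_mul_smallest_prime (F : Type*) [Field F] [NumberField F]
    (n p : ℕ) (hn : IsFPractical F n) (hp : p.Prime) (hpn : ¬ p ∣ n)
    (hmin : ∀ q : ℕ, q.Prime → q < p → q ∣ n) :
    IsFPractical F (p * n) := by
  obtain ⟨hn1, hdiv⟩ := hn
  have hp2 := hp.two_le
  have hcop : Nat.Coprime p n := (Nat.coprime_comm.mpr (hp.coprime_iff_not_dvd.mpr hpn)).symm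
  have hnp1 : p - 1 ≤ n := sub_one_le_of_smallest_prime hn1 hp hmin
  have hQdvdPN : (X ^ n - 1 : F[X]) ∣ X ^ (p * n) - 1 := by
    have h := sub_dvd_pow_sub_pow (X ^ n : F[X]) 1 p
    rwa [← pow_mul, one_pow, mul_comm n p] at h
  refine ⟨Nat.one_le_iff_ne_zero.mpr (Nat.mul_ne_zero (by omega) (by omega)), fun m hm => ?_⟩
  by_cases hmn : m ≤ n
  · obtain ⟨d, h1, h2, h3⟩ := hdiv m hmn
    exact ⟨d, h1, h2.trans hQdvdPN, h3⟩
  · set k := p - 1 with hkdef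
    have hk1 : 1 ≤ k := by omega
    set a := min n (m / k) with ha
    set b := m - k * a with hb
    have haleq : a ≤ n := min_le_left _ _
    have hka : k * a ≤ m := by
      have h1 : k * a ≤ k * (m / k) := Nat.mul_le_mul_left k (min_le_right _ _)
      have h2 := Nat.div_add_mod m k
      omega
    have hbn : b ≤ n := by
      rcases le_or_gt (m / k) n with h | h
      · have haeq : a = m / k := min_eq_right h
        have h2 := Nat.div_add_mod m k
        have h3 : m % k < k := Nat.mod_lt _ (by omega)
        rw [hb, haeq]
        omega
      · have haeq : a = n := min_eq_left h.le
        have hpn' : p * n = k * n + n := by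
          have hpk : p = k + 1 := by omega
          rw [hpk, add_mul, one_mul]
        rw [hb, haeq]
        omega
    have hsum : k * a + b = m := by omega
    obtain ⟨d1, hd1m, hd1dvd, hd1deg⟩ := hdiv a haleq
    obtain ⟨g, hgm, hgdvd, hgcop, hgdeg⟩ :=
      keyFactor (show 0 < n by omega) (show 0 < p by omega) hcop hd1m hd1dvd
    obtain ⟨d2, hd2m, hd2dvd, hd2deg⟩ := hdiv b hbn
    refine ⟨g * d2, hgm.mul hd2m, ?_, ?_⟩
    · exact (hgcop.of_isCoprime_of_dvd_right hd2dvd).mul_dvd hgdvd (hd2dvd.trans hQdvdPN)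
    · rw [natDegree_mul hgm.ne_zero hd2m.ne_zero, hgdeg, hd1deg, hd2deg, ← hkdef, hsum]
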